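/- arXiv:2005.06886 — 2 statements merged into one kernel-verified Lean document; each statement's English description precedes it below -/
import Mathlib

section
/- Let (n₁,n₂,n₃,z₁,z₂,z₃) be random variables with the pairs (n_j,z_j) mutually independent, Pr{n_j = 0, z_j = 1} ≤ t for each j, and Pr{n₁+n₂+n₃ ≥ 3} ≤ q₃. Then Pr{z₁ = z₂ = z₃ = 1} ≤ q₃ + t³ + 6t² + 3t. -/
open MeasureTheory ProbabilityTheory

/-- Pr{z₁ = z₂ = z₃ = 1} ≤ q₃ + t³ + 6t² + 3t. -/
theorem stmt5 {Ω : Type*} [MeasurableSpace Ω] (P : Measure Ω) [IsProbabilityMeasure P]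
    (n : Fin 3 → Ω → ℕ) (z : Fin 3 → Ω → Bool)
    (hmn : ∀ j, Measurable (n j)) (hmz : ∀ j, Measurable (z j))
    (hindep : iIndepFun (fun j ω => (n j ω, z j ω)) P)
    (t : ℝ) (ht : 0 ≤ t)
    (hbound : ∀ j, (P {ω | n j ω = 0 ∧ z j ω = true}).toReal ≤ t)
    (q3 : ℝ) (hq3 : 0 ≤ q3)
    (htail : (P {ω | 3 ≤ n 0 ω + n 1 ω + n 2 ω}).toReal ≤ q3) :
    (P {ω | z 0 ω = true ∧ z 1 ω = true ∧ z 2 ω = true}).toReal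
      ≤ q3 + t ^ 3 + 6 * t ^ 2 + 3 * t := by
  set A := {ω | z 0 ω = true ∧ z 1 ω = true ∧ z 2 ω = true}
  set B := {ω | 3 ≤ n 0 ω + n 1 ω + n 2 ω}
  set C : Fin 3 → Set Ω := fun j => {ω | n j ω = 0 ∧ z j ω = true}
  have hsub : A ⊆ B ∪ (C 0 ∪ (C 1 ∪ C 2)) := by
    intro ω hω
    obtain ⟨h0, h1, h2⟩ := hω
    by_cases hB : 3 ≤ n 0 ω + n 1 ω + n 2 ω
    · exact Or.inl hB
    · right
      push_neg at hB
      have : n 0 ω = 0 ∨ n 1 ω = 0 ∨ n 2 ω = 0 := by omega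
      rcases this with h | h | h
      · exact Or.inl ⟨h, h0⟩
      · exact Or.inr (Or.inl ⟨h, h1⟩)
      · exact Or.inr (Or.inr ⟨h, h2⟩)
  have hle : P A ≤ P B + (P (C 0) + (P (C 1) + P (C 2))) := by
    calc P A ≤ P (B ∪ (C 0 ∪ (C 1 ∪ C 2))) := measure_mono hsub
    _ ≤ P B + P (C 0 ∪ (C 1 ∪ C 2)) := measure_union_le _ _
    _ ≤ P B + (P (C 0) + P (C 1 ∪ C 2)) := by
        gcongr; exact measure_union_le _ _
    _ ≤ P B + (P (C 0) + (P (C 1) + P (C 2))) := by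
        gcongr; exact measure_union_le _ _
  have htr : (P A).toReal ≤ (P B).toReal + ((P (C 0)).toReal + ((P (C 1)).toReal + (P (C 2)).toReal)) := by
    have := ENNReal.toReal_mono (by finiteness) hle
    rwa [ENNReal.toReal_add (by finiteness) (by finiteness),
      ENNReal.toReal_add (by finiteness) (by finiteness),
      ENNReal.toReal_add (by finiteness) (by finiteness)] at this
  have h0 := hbound 0
  have h1 := hbound 1
  have h2 := hbound 2
  nlinarith [sq_nonneg t, pow_nonneg ht 3]
end

section
/- Let (n₁,n₂,n₃,z₁,z₂,z₃) be random variables with the pairs (n_j,z_j) mutually independent, Pr{n_j = 0, z_j = 1} ≤ t for each j, and Pr{n₁+n₂+n₃ ≥ 2} ≤ q₂. Then Pr{z₁+z₂+z₃ ≥ 2} ≤ q₂ + t³ + 9t² + 6t. -/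
open MeasureTheory ProbabilityTheory

/-- Pr{z₁+z₂+z₃ ≥ 2} ≤ q₂ + t³ + 9t² + 6t. -/
theorem stmt7 {Ω : Type*} [MeasurableSpace Ω] (P : Measure Ω) [IsProbabilityMeasure P]
    (n : Fin 3 → Ω → ℕ) (z : Fin 3 → Ω → Bool)
    (hmn : ∀ j, Measurable (n j)) (hmz : ∀ j, Measurable (z j))
    (hindep : iIndepFun (fun j ω => (n j ω, z j ω)) P)
    (t : ℝ) (ht : 0 ≤ t)
    (hbound : ∀ j, (P {ω | n j ω = 0 ∧ z j ω = true}).toReal ≤ t)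
    (q2 : ℝ) (hq2 : 0 ≤ q2)
    (htail : (P {ω | 2 ≤ n 0 ω + n 1 ω + n 2 ω}).toReal ≤ q2) :
    (P {ω | 2 ≤ (if z 0 ω then 1 else 0) + (if z 1 ω then 1 else 0) + (if z 2 ω then 1 else 0)}).toReal
      ≤ q2 + t ^ 3 + 9 * t ^ 2 + 6 * t := by
  set T : Set Ω := {ω | 2 ≤ n 0 ω + n 1 ω + n 2 ω} with hT
  set A : Fin 3 → Set Ω := fun j => {ω | n j ω = 0 ∧ z j ω = true} with hA
  have hsub : {ω | 2 ≤ (if z 0 ω then 1 else 0) + (if z 1 ω then 1 else 0) + (if z 2 ω then 1 else 0)}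
      ⊆ T ∪ (A 0 ∪ (A 1 ∪ A 2)) := by
    intro ω hω
    simp only [Set.mem_setOf_eq] at hω
    by_cases hTc : 2 ≤ n 0 ω + n 1 ω + n 2 ω
    · exact Or.inl hTc
    · right
      push_neg at hTc
      simp only [Set.mem_union, hA, Set.mem_setOf_eq]
      rcases hz0 : z 0 ω <;> rcases hz1 : z 1 ω <;> rcases hz2 : z 2 ω <;>
        simp [hz0, hz1, hz2] at hω ⊢ <;> omega
  have hfin : ∀ s : Set Ω, P s ≠ ⊤ := fun s => measure_ne_top P s
  have h1 : P {ω | 2 ≤ (if z 0 ω then 1 else 0) + (if z 1 ω then 1 else 0) + (if z 2 ω then 1 else 0)}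
      ≤ P T + (P (A 0) + (P (A 1) + P (A 2))) := by
    refine le_trans (measure_mono hsub) ?_
    refine le_trans (measure_union_le _ _) ?_
    gcongr
    refine le_trans (measure_union_le _ _) ?_
    gcongr
    exact measure_union_le _ _
  have h2 : (P {ω | 2 ≤ (if z 0 ω then 1 else 0) + (if z 1 ω then 1 else 0) + (if z 2 ω then 1 else 0)}).toReal
      ≤ (P T).toReal + ((P (A 0)).toReal + ((P (A 1)).toReal + (P (A 2)).toReal)) := by
    have := ENNReal.toReal_mono (by finiteness) h1
    rwa [ENNReal.toReal_add (hfin _) (by finiteness), ENNReal.toReal_add (hfin _) (by finiteness),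
      ENNReal.toReal_add (hfin _) (hfin _)] at this
  have hb0 := hbound 0
  have hb1 := hbound 1
  have hb2 := hbound 2
  simp only [hA] at h2
  nlinarith [h2, htail]
end
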